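/- For every integer n ≥ 2, the complete graph K_n satisfies χ'_sCF(K_n) ≤ 2⌈log₂ n⌉. -/

import Mathlib

open SimpleGraph

/-- An edge `e` is *satisfied* by the colouring `c` of (the edges of) the graph `H` if some
colour is assigned by `c` to exactly one edge of `H` incident to an endpoint of `e`. -/
def CFSatisfies {V : Type*} {k : ℕ} (H : SimpleGraph V) (c : Sym2 V → Fin k) (e : Sym2 V) :
    Prop :=
  ∃ col : Fin k, ∃! f : Sym2 V, f ∈ H.edgeSet ∧ (∃ x ∈ e, x ∈ f) ∧ c f = col

/-- The conflict-free chromatic index `χ'_CF(G)`: the least `k` such that `G` admits an edge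
colouring with `k` colours in which every edge of `G` is satisfied. -/
noncomputable def cfChromIndex {V : Type*} (G : SimpleGraph V) : ℕ :=
  sInf {k | ∃ c : Sym2 V → Fin k, ∀ e ∈ G.edgeSet, CFSatisfies G c e}

/-- The parameter `χ'_sCF(G)`: the least `k` for which some subgraph `H` of `G` admits an edge
colouring with `k` colours such that every edge of `G` is satisfied. -/
noncomputable def scfChromIndex {V : Type*} (G : SimpleGraph V) : ℕ :=
  sInf {k | ∃ H : SimpleGraph V, H ≤ G ∧
    ∃ c : Sym2 V → Fin k, ∀ e ∈ G.edgeSet, CFSatisfies H c e}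

namespace CFAux

def ctr (i x : ℕ) : Prop := (x+1) % 2^(i+1) = 2^i

lemma ctr_exists (x : ℕ) : ∃ i, ctr i x := by
  have key : ∀ m, 0 < m → ∃ i, m % 2^(i+1) = 2^i := by
    intro m
    induction m using Nat.strong_induction_on with
    | _ m ih =>
      intro hm
      rcases Nat.even_or_odd m with he | ho
      · obtain ⟨k, hk⟩ := he
        have hkpos : 0 < k := by omega
        obtain ⟨i, hi⟩ := ih k (by omega) hkpos
        refine ⟨i+1, ?_⟩
        have h1 : m = 2 * k := by omega
        have h2 : (2:ℕ)^(i+1+1) = 2 * 2^(i+1) := by ring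
        have h3 : (2:ℕ)^(i+1) = 2 * 2^i := by ring
        rw [h1, h2, Nat.mul_mod_mul_left, hi, h3]
      · refine ⟨0, ?_⟩
        have : m % 2 = 1 := Nat.odd_iff.1 ho
        simpa using this
  exact key (x+1) (by omega)

lemma ctr_uniq {i j x : ℕ} (hi : ctr i x) (hj : ctr j x) : i = j := by
  by_contra hne
  wlog hlt : i < j generalizing i j
  · exact this hj hi (Ne.symm hne) (by omega)
  have hd : (2:ℕ)^(i+1) ∣ 2^(j+1) := pow_dvd_pow 2 (by omega)
  have h1 : (x+1) % 2^(i+1) = ((x+1) % 2^(j+1)) % 2^(i+1) := (Nat.mod_mod_of_dvd _ hd).symm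
  rw [hj] at h1
  have h2 : (2:ℕ)^j % 2^(i+1) = 0 := Nat.mod_eq_zero_of_dvd (pow_dvd_pow 2 (by omega))
  rw [h2] at h1
  have h3 : (0:ℕ) < 2^i := by positivity
  rw [hi] at h1
  omega

lemma ctr_le {i x : ℕ} (h : ctr i x) : 2^i ≤ x + 1 := h ▸ Nat.mod_le _ _

lemma ctr_odd {i x : ℕ} (h : ctr i x) (hi : 1 ≤ i) : x % 2 = 1 := by
  have hd : (2:ℕ) ∣ 2^(i+1) := dvd_pow_self 2 (by omega)
  have h1 : (x+1) % 2 = 2^i % 2 := by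
    rw [← Nat.mod_mod_of_dvd (x+1) hd, h]
  have h2 : (2:ℕ)^i % 2 = 0 := Nat.mod_eq_zero_of_dvd (dvd_pow_self 2 (by omega))
  omega

lemma ctr_dvd {i a b : ℕ} (ha : ctr i a) (hb : ctr i b) (hab : a ≤ b) : 2^(i+1) ∣ b - a := by
  have h : (a+1) ≡ (b+1) [MOD 2^(i+1)] := by
    unfold Nat.ModEq
    rw [ha, hb]
  have := (Nat.modEq_iff_dvd' (by omega : a+1 ≤ b+1)).1 h
  simpa using this

noncomputable def v2 (x : ℕ) : ℕ := (ctr_exists x).choose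

lemma ctr_v2 (x : ℕ) : ctr (v2 x) x := (ctr_exists x).choose_spec

lemma v2_eq {i x : ℕ} (h : ctr i x) : v2 x = i := ctr_uniq (ctr_v2 x) h

lemma split : ∀ v u : ℕ, u < v → ∃ i s, ctr i s ∧ u ≤ s ∧ s < v ∧ v ≤ s + 2^i ∧ s < u + 2^i := by
  intro v
  induction v using Nat.strong_induction_on with
  | _ v ih =>
    intro u huv
    by_cases h : u / 2 = v / 2
    · refine ⟨0, u, ?_, le_refl _, huv, by omega, by omega⟩
      show (u+1) % 2^(0+1) = 2^0
      simp only [pow_one, pow_zero]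
      omega
    · have h2 : u/2 < v/2 := by omega
      have hv2 : v / 2 < v := by omega
      obtain ⟨i, s, hctr, hu, hsv, hv, hs⟩ := ih (v/2) hv2 (u/2) h2
      have hp : (2:ℕ)^(i+1) = 2 * 2^i := by ring
      refine ⟨i+1, 2*s+1, ?_, by omega, by omega, by omega, by omega⟩
      show (2*s+1+1) % 2^(i+1+1) = 2^(i+1)
      have e0 : 2*s+1+1 = 2*(s+1) := by ring
      have e1 : (2:ℕ)^(i+1+1) = 2 * 2^(i+1) := by ring
      rw [e0, e1, Nat.mul_mod_mul_left, hctr, hp]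

noncomputable def colN (t x y : ℕ) : ℕ :=
  if x % 2 = 0 ∧ y = x + 1 then t - 1 + v2 (x+1) else v2 x

lemma colN_beta_facts {t n x y : ℕ} (hyn : y < n) (hnt : n ≤ 2^t)
    (hb : x % 2 = 0 ∧ y = x + 1) :
    colN t x y = t - 1 + v2 (x+1) ∧ 1 ≤ v2 (x+1) ∧ v2 (x+1) ≤ t := by
  refine ⟨if_pos hb, ?_, ?_⟩
  · by_contra h0
    have h0' : v2 (x+1) = 0 := by omega
    have := ctr_v2 (x+1)
    rw [h0'] at this
    have : (x+1+1) % 2 = 1 := by simpa [ctr] using this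
    omega
  · have h1 := ctr_le (ctr_v2 (x+1))
    have h2 : (2:ℕ)^(v2 (x+1)) ≤ 2^t := by omega
    exact (Nat.pow_le_pow_iff_right (by norm_num)).1 h2

lemma colN_alpha_facts {t n x y : ℕ} (hxy : x < y) (hyn : y < n) (hnt : n ≤ 2^t)
    (hH : ∃ i, ctr i x ∧ y ≤ x + 2^i) (hb : ¬(x % 2 = 0 ∧ y = x + 1)) :
    ctr (colN t x y) x ∧ y ≤ x + 2^(colN t x y) ∧ colN t x y < t := by
  obtain ⟨i, hi, hy⟩ := hH
  have hc : colN t x y = i := by rw [colN, if_neg hb]; exact v2_eq hi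
  rw [hc]
  refine ⟨hi, hy, ?_⟩
  have h1 := ctr_le hi
  have h2 : (2:ℕ)^i < 2^t := by omega
  exact (Nat.pow_lt_pow_iff_right (by norm_num)).1 h2

lemma colN_lt {t n x y : ℕ} (h1t : 1 ≤ t) (hxy : x < y) (hyn : y < n) (hnt : n ≤ 2^t)
    (hH : ∃ i, ctr i x ∧ y ≤ x + 2^i) : colN t x y < 2*t := by
  by_cases hb : x % 2 = 0 ∧ y = x + 1
  · obtain ⟨h1, h2, h3⟩ := colN_beta_facts hyn hnt hb
    omega
  · have := (colN_alpha_facts hxy hyn hnt hH hb).2.2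
    omega

lemma colN_alpha_decode {t n x y : ℕ} (hxy : x < y) (hyn : y < n) (hnt : n ≤ 2^t)
    (hH : ∃ i, ctr i x ∧ y ≤ x + 2^i) {i : ℕ} (hit : i < t) (hcol : colN t x y = i) :
    ctr i x ∧ y ≤ x + 2^i := by
  by_cases hb : x % 2 = 0 ∧ y = x + 1
  · obtain ⟨h1, h2, h3⟩ := colN_beta_facts hyn hnt hb
    omega
  · obtain ⟨h1, h2, h3⟩ := colN_alpha_facts hxy hyn hnt hH hb
    rw [hcol] at h1 h2
    exact ⟨h1, h2⟩

lemma colN_beta_decode {t n x y : ℕ} (hxy : x < y) (hyn : y < n) (hnt : n ≤ 2^t)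
    (hH : ∃ i, ctr i x ∧ y ≤ x + 2^i) {j : ℕ} (hj1 : 1 ≤ j)
    (hcol : colN t x y = t - 1 + j) (hjt : j ≤ t) :
    x % 2 = 0 ∧ y = x + 1 ∧ ctr j (x+1) := by
  by_cases hb : x % 2 = 0 ∧ y = x + 1
  · obtain ⟨h1, h2, h3⟩ := colN_beta_facts hyn hnt hb
    have hv : v2 (x+1) = j := by omega
    exact ⟨hb.1, hb.2, hv ▸ ctr_v2 (x+1)⟩
  · have h3 := (colN_alpha_facts hxy hyn hnt hH hb).2.2
    omega

end CFAux

namespace CFAux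

def Hgraph (n : ℕ) : SimpleGraph (Fin n) where
  Adj a b := a ≠ b ∧ ∃ i, ctr i (min a.val b.val) ∧ (max a.val b.val) ≤ (min a.val b.val) + 2^i
  symm := by
    constructor
    intro a b ⟨h1, h2⟩
    exact ⟨h1.symm, by rwa [min_comm b.val, max_comm b.val]⟩
  loopless := ⟨fun a h => h.1 rfl⟩

noncomputable def cfun (n t : ℕ) (ht : 0 < t) : Sym2 (Fin n) → Fin (2*t) :=
  Sym2.lift ⟨fun a b => ⟨colN t (min a.val b.val) (max a.val b.val) % (2*t), Nat.mod_lt _ (by omega)⟩,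
    by intro a b; simp [min_comm a.val, max_comm a.val]⟩

lemma cfun_eval (n t : ℕ) (ht : 0 < t) (a b : Fin n) (h : a.val ≤ b.val) :
    ((cfun n t ht) s(a,b)).val = colN t a.val b.val % (2*t) := by
  simp only [cfun, Sym2.lift_mk]
  simp [min_eq_left h, max_eq_right h]

lemma hgraph_adj_of {n : ℕ} {a b : Fin n} (h : a.val < b.val)
    (hH : ∃ i, ctr i a.val ∧ b.val ≤ a.val + 2^i) : (Hgraph n).Adj a b := by
  refine ⟨fun he => by simp [he] at h, ?_⟩
  rwa [min_eq_left h.le, max_eq_right h.le]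

lemma hgraph_adj_to {n : ℕ} {a b : Fin n} (h : a.val < b.val)
    (hadj : (Hgraph n).Adj a b) : ∃ i, ctr i a.val ∧ b.val ≤ a.val + 2^i := by
  have := hadj.2
  rwa [min_eq_left h.le, max_eq_right h.le] at this

lemma key (n t : ℕ) (ht : 0 < t) (hnt : n ≤ 2^t) (a b : Fin n) (hab : a.val < b.val) :
    CFSatisfies (Hgraph n) (cfun n t ht) s(a,b) := by
  obtain ⟨i, s, hctr, has, hsb, hbs, hsa⟩ := split b.val a.val hab
  have hbn : b.val < n := b.isLt
  have hsn : s < n := lt_trans hsb hbn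
  have hp2 : (2:ℕ)^(i+1) = 2 * 2^i := by ring
  -- helper to get the four touch possibilities
  have touchv : ∀ p q : Fin n, (∃ x, x ∈ s(a,b) ∧ x ∈ s(p,q)) →
      p.val = a.val ∨ p.val = b.val ∨ q.val = a.val ∨ q.val = b.val := by
    rintro p q ⟨x, hx1, hx2⟩
    rw [Sym2.mem_iff] at hx1 hx2
    rcases hx1 with rfl | rfl <;> rcases hx2 with h' | h'
    · exact Or.inl (by rw [← h'])
    · exact Or.inr (Or.inr (Or.inl (by rw [← h'])))
    · exact Or.inr (Or.inl (by rw [← h']))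
    · exact Or.inr (Or.inr (Or.inr (by rw [← h'])))
  rcases eq_or_lt_of_le has with heq | hlt
  · -- CASE B : a.val = s
    rcases Nat.eq_zero_or_pos i with hi0 | hi1
    · -- B1 : i = 0
      subst hi0
      have hb1 : b.val = s + 1 := by
        have h20 : (2:ℕ)^0 = 1 := pow_zero 2
        omega
      have hs0 : s % 2 = 0 := by
        have h' := hctr
        simp only [ctr, pow_one, pow_zero] at h'
        omega
      have hfmem : s(a, b) ∈ (Hgraph n).edgeSet := by
        rw [SimpleGraph.mem_edgeSet]
        refine hgraph_adj_of hab ⟨0, ?_, by simp only [pow_zero]; omega⟩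
        show (a.val+1) % 2^(0+1) = 2^0
        simp only [pow_one, pow_zero]
        omega
      have hbfacts := colN_beta_facts (t := t) (x := a.val) hbn hnt ⟨by omega, by omega⟩
      set j := v2 (a.val + 1) with hjdef
      have hcf : ((cfun n t ht) s(a,b)).val = t - 1 + j := by
        rw [cfun_eval n t ht a b hab.le, hbfacts.1, Nat.mod_eq_of_lt (by omega)]
      refine ⟨cfun n t ht s(a,b), s(a,b), ⟨hfmem, ⟨a, by simp, by simp⟩, rfl⟩, ?_⟩
      have uniq : ∀ p q : Fin n, p.val < q.val → (Hgraph n).Adj p q →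
          (∃ x, x ∈ s(a,b) ∧ x ∈ s(p,q)) → ((cfun n t ht) s(p,q)).val = t - 1 + j →
          s(p,q) = s(a,b) := by
        intro p q hpq hadj htouch hcol
        have hHpq := hgraph_adj_to hpq hadj
        rw [cfun_eval n t ht p q hpq.le] at hcol
        have hlt2 := colN_lt ht hpq q.isLt hnt hHpq
        have hcol' : colN t p.val q.val = t - 1 + j := by
          rw [Nat.mod_eq_of_lt hlt2] at hcol
          exact hcol
        obtain ⟨hpe, hq1, _⟩ :=
          colN_beta_decode hpq q.isLt hnt hHpq hbfacts.2.1 hcol' hbfacts.2.2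
        rcases touchv p q htouch with h | h | h | h
        · have hq : q.val = b.val := by omega
          rw [show p = a from Fin.ext h, show q = b from Fin.ext hq]
        · exfalso; omega
        · exfalso; omega
        · have hp : p.val = a.val := by omega
          rw [show p = a from Fin.ext hp, show q = b from Fin.ext h]
      rintro g ⟨hgE, hgT, hgC⟩
      induction g using Sym2.ind with
      | _ p q =>
        have hadj : (Hgraph n).Adj p q := (SimpleGraph.mem_edgeSet _).1 hgE
        have hCval : ((cfun n t ht) s(p,q)).val = t - 1 + j :=
          (congrArg Fin.val hgC).trans hcf
        rcases lt_trichotomy p.val q.val with h | h | h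
        · exact uniq p q h hadj hgT hCval
        · exact absurd (Fin.ext h) hadj.1
        · have e1 : s(p,q) = s(q,p) := Sym2.eq_swap
          rw [e1] at hgT hCval ⊢
          exact uniq q p h hadj.symm hgT hCval
    · -- B2 : 1 ≤ i, a.val = s
      have hsodd : s % 2 = 1 := ctr_odd hctr hi1
      have hs1 : 1 ≤ s := by omega
      have h2i : (2:ℕ) ≤ 2^i := by
        calc (2:ℕ) = 2^1 := by norm_num
        _ ≤ 2^i := Nat.pow_le_pow_right (by norm_num) hi1
      have hit : i < t := by
        have h1 := ctr_le hctr
        have h2 : (2:ℕ)^i < 2^t := by omega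
        exact (Nat.pow_lt_pow_iff_right (by norm_num)).1 h2
      set S' : Fin n := ⟨s - 1, by omega⟩ with hS'
      have hS'v : S'.val = s - 1 := rfl
      have hS'a : S'.val < a.val := by omega
      have hfmem : s(S', a) ∈ (Hgraph n).edgeSet := by
        rw [SimpleGraph.mem_edgeSet]
        refine hgraph_adj_of hS'a ⟨0, ?_, by
          show a.val ≤ S'.val + 2^0
          simp only [pow_zero]
          omega⟩
        show (S'.val+1) % 2^(0+1) = 2^0
        simp only [pow_one, pow_zero, hS'v]
        omega
      have hveq : v2 (S'.val + 1) = i := by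
        have : S'.val + 1 = s := by omega
        rw [this]
        exact v2_eq hctr
      have hcf : ((cfun n t ht) s(S', a)).val = t - 1 + i := by
        rw [cfun_eval n t ht S' a hS'a.le]
        have hbf : colN t S'.val a.val = t - 1 + v2 (S'.val + 1) :=
          if_pos ⟨by omega, by omega⟩
        rw [hbf, hveq, Nat.mod_eq_of_lt (by omega)]
      refine ⟨cfun n t ht s(S', a), s(S', a), ⟨hfmem, ⟨a, by simp, by simp⟩, rfl⟩, ?_⟩
      have uniq : ∀ p q : Fin n, p.val < q.val → (Hgraph n).Adj p q →
          (∃ x, x ∈ s(a,b) ∧ x ∈ s(p,q)) → ((cfun n t ht) s(p,q)).val = t - 1 + i →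
          s(p,q) = s(S',a) := by
        intro p q hpq hadj htouch hcol
        have hHpq := hgraph_adj_to hpq hadj
        rw [cfun_eval n t ht p q hpq.le] at hcol
        have hlt2 := colN_lt ht hpq q.isLt hnt hHpq
        have hcol' : colN t p.val q.val = t - 1 + i := by
          rw [Nat.mod_eq_of_lt hlt2] at hcol; exact hcol
        obtain ⟨hpe, hq1, hctrp⟩ :=
          colN_beta_decode hpq q.isLt hnt hHpq hi1 hcol' hit.le
        rcases touchv p q htouch with h | h | h | h
        · exfalso; omega
        · -- p.val = b.val : ctr i (b.val+1) vs ctr i s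
          exfalso
          have hcb : ctr i (b.val + 1) := by rw [← h]; exact hctrp
          have hd := ctr_dvd hctr hcb (by omega)
          have := Nat.le_of_dvd (by omega) hd
          omega
        · -- q.val = a.val = s : p = s - 1
          have hps : p.val = s - 1 := by omega
          rw [show p = S' from Fin.ext hps, show q = a from Fin.ext (by omega)]
        · -- q.val = b.val : ctr i b.val vs ctr i s
          exfalso
          have hcb : ctr i b.val := by rw [← h, hq1]; exact hctrp
          have hd := ctr_dvd hctr hcb (by omega)
          have := Nat.le_of_dvd (by omega) hd
          omega
      rintro g ⟨hgE, hgT, hgC⟩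
      induction g using Sym2.ind with
      | _ p q =>
        have hadj : (Hgraph n).Adj p q := (SimpleGraph.mem_edgeSet _).1 hgE
        have hCval : ((cfun n t ht) s(p,q)).val = t - 1 + i :=
          (congrArg Fin.val hgC).trans hcf
        rcases lt_trichotomy p.val q.val with h | h | h
        · exact uniq p q h hadj hgT hCval
        · exact absurd (Fin.ext h) hadj.1
        · have e1 : s(p,q) = s(q,p) := Sym2.eq_swap
          rw [e1] at hgT hCval ⊢
          exact uniq q p h hadj.symm hgT hCval
  · -- CASE A : a.val < s
    have hi1 : 1 ≤ i := by
      rcases Nat.eq_zero_or_pos i with h0 | h1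
      · exfalso; rw [h0] at hsa; simp at hsa; omega
      · exact h1
    have hsodd : s % 2 = 1 := ctr_odd hctr hi1
    have hit : i < t := by
      have h1 := ctr_le hctr
      have h2 : (2:ℕ)^i < 2^t := by omega
      exact (Nat.pow_lt_pow_iff_right (by norm_num)).1 h2
    set S : Fin n := ⟨s, hsn⟩ with hS
    have hSv : S.val = s := rfl
    have hSb : S.val < b.val := hsb
    have hfmem : s(S, b) ∈ (Hgraph n).edgeSet := by
      rw [SimpleGraph.mem_edgeSet]
      exact hgraph_adj_of hSb ⟨i, hctr, hbs⟩
    have hcf : ((cfun n t ht) s(S,b)).val = i := by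
      rw [cfun_eval n t ht S b hSb.le]
      have : colN t S.val b.val = i := by
        rw [colN, if_neg (by rw [hSv]; omega)]
        exact v2_eq hctr
      rw [this, Nat.mod_eq_of_lt (by omega)]
    refine ⟨cfun n t ht s(S,b), s(S,b), ⟨hfmem, ⟨b, by simp, by simp⟩, rfl⟩, ?_⟩
    have uniq : ∀ p q : Fin n, p.val < q.val → (Hgraph n).Adj p q →
        (∃ x, x ∈ s(a,b) ∧ x ∈ s(p,q)) → ((cfun n t ht) s(p,q)).val = i →
        s(p,q) = s(S,b) := by
      intro p q hpq hadj htouch hcol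
      have hHpq := hgraph_adj_to hpq hadj
      rw [cfun_eval n t ht p q hpq.le] at hcol
      have hlt2 := colN_lt ht hpq q.isLt hnt hHpq
      have hcol' : colN t p.val q.val = i := by
        rw [Nat.mod_eq_of_lt hlt2] at hcol; exact hcol
      obtain ⟨hctrp, hlep⟩ := colN_alpha_decode hpq q.isLt hnt hHpq hit hcol'
      rcases touchv p q htouch with h | h | h | h
      · exfalso
        have hca : ctr i a.val := h ▸ hctrp
        have hd := ctr_dvd hca hctr (by omega)
        have := Nat.le_of_dvd (by omega) hd
        omega
      · exfalso
        have hcb : ctr i b.val := h ▸ hctrp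
        have hd := ctr_dvd hctr hcb (by omega)
        have := Nat.le_of_dvd (by omega) hd
        omega
      · exfalso
        have hd := ctr_dvd hctrp hctr (by omega)
        have := Nat.le_of_dvd (by omega) hd
        omega
      · by_cases hps : p.val = s
        · rw [show p = S from Fin.ext hps, show q = b from Fin.ext h]
        · exfalso
          rcases lt_or_gt_of_ne hps with h' | h'
          · have hd := ctr_dvd hctrp hctr (by omega)
            have := Nat.le_of_dvd (by omega) hd
            omega
          · have hd := ctr_dvd hctr hctrp (by omega)
            have := Nat.le_of_dvd (by omega) hd
            omega
    rintro g ⟨hgE, hgT, hgC⟩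
    induction g using Sym2.ind with
    | _ p q =>
      have hadj : (Hgraph n).Adj p q := (SimpleGraph.mem_edgeSet _).1 hgE
      have hCval : ((cfun n t ht) s(p,q)).val = i :=
        (congrArg Fin.val hgC).trans hcf
      rcases lt_trichotomy p.val q.val with h | h | h
      · exact uniq p q h hadj hgT hCval
      · exact absurd (Fin.ext h) hadj.1
      · have e1 : s(p,q) = s(q,p) := Sym2.eq_swap
        rw [e1] at hgT hCval ⊢
        exact uniq q p h hadj.symm hgT hCval

end CFAux

/-- For every `n ≥ 2`, `χ'_sCF(K_n) ≤ 2⌈log₂ n⌉`. -/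
theorem scfChromIndex_complete_le (n : ℕ) (hn : 2 ≤ n) :
    scfChromIndex (⊤ : SimpleGraph (Fin n)) ≤ 2 * Nat.clog 2 n := by
  have htpos : 0 < Nat.clog 2 n := Nat.clog_pos one_lt_two hn
  have hnt : n ≤ 2 ^ Nat.clog 2 n := Nat.le_pow_clog one_lt_two n
  apply Nat.sInf_le
  refine ⟨CFAux.Hgraph n, le_top, CFAux.cfun n (Nat.clog 2 n) htpos, ?_⟩
  intro e he
  induction e using Sym2.ind with
  | _ a b =>
    rw [SimpleGraph.mem_edgeSet, SimpleGraph.top_adj] at he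
    have hv : a.val ≠ b.val := fun h => he (Fin.ext h)
    rcases lt_or_gt_of_ne hv with h | h
    · exact CFAux.key n _ htpos hnt a b h
    · have := CFAux.key n _ htpos hnt b a h
      rwa [Sym2.eq_swap] at this
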